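/- arXiv:1006.3039 — 8 statements merged into one kernel-verified Lean document; each statement's English description precedes it below -/
import Mathlib

section
/- For a monotonic multiset rewriting system, derivations on disjoint parts of a store can be combined: if S ⊎ S₁ ⤳* S ⊎ S₂ and S ⊎ S₃ ⤳* S ⊎ S₄, then S ⊎ S₁ ⊎ S₃ ⤳* S ⊎ S₂ ⊎ S₄ (the Concurrency rule of the abstract CHR semantics is admissible). -/
lemma lift_rtg {C : Type*} (R : Multiset C → Multiset C → Prop)
    (hmono : ∀ A B S : Multiset C, R A B → R (A + S) (B + S))
    {A B : Multiset C} (T : Multiset C)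
    (h : Relation.ReflTransGen R A B) :
    Relation.ReflTransGen R (A + T) (B + T) := by
  induction h with
  | refl => exact Relation.ReflTransGen.refl
  | tail _ hstep ih => exact ih.tail (hmono _ _ _ hstep)

/-- Admissibility of the Concurrency rule of the abstract CHR semantics
for any monotonic multiset rewriting system. -/
theorem concurrency_admissible {C : Type*}
    (R : Multiset C → Multiset C → Prop)
    (hmono : ∀ A B S : Multiset C, R A B → R (A + S) (B + S))
    (S S₁ S₂ S₃ S₄ : Multiset C)
    (h13 : Relation.ReflTransGen R (S + S₁) (S + S₂))
    (h24 : Relation.ReflTransGen R (S + S₃) (S + S₄)) :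
    Relation.ReflTransGen R (S + S₁ + S₃) (S + S₂ + S₄) := by
  have h1 := lift_rtg R hmono S₃ h13
  have h2 := lift_rtg R hmono S₂ h24
  refine h1.trans ?_
  have : S + S₂ + S₃ = S + S₃ + S₂ := by rw [add_right_comm]
  rw [this]
  have : S + S₂ + S₄ = S + S₄ + S₂ := by rw [add_right_comm]
  rw [this]
  exact h2
end

section
/- k-Concurrency: for any finite k ≥ 2, k mutually non-overlapping concurrent goal-based derivation steps operating on a shared store, where derivation i simplifies H_{Si} and propagates H_{Pi} ⊆ S with all H_{Si} pairwise disjoint and disjoint from S, can be combined into a single concurrent derivation step with side-effect (H_{P1} ∪ ... ∪ H_{Pk}) \ (H_{S1} ∪ ... ∪ H_{Sk}) by k−1 applications of the binary Goal-Concurrency rule. -/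
/-- k-Concurrency: any relation `CStep` on CHR states (goal multiset, store
as a finite set) carrying side-effects `(H_P, H_S)` that is closed under the
binary Goal-Concurrency rule is also closed under the k-ary rule, for
k mutually non-overlapping concurrent derivation steps on a shared store. -/
theorem k_concurrency {Gl C : Type*} [DecidableEq C]
    (CStep : Multiset Gl × Finset C → Finset C × Finset C →
             Multiset Gl × Finset C → Prop)
    -- closure under the binary Goal-Concurrency rule
    (hGC : ∀ (G₁ G₁' G₂ G₂' Gr : Multiset Gl) (HP₁ HP₂ HS₁ HS₂ S : Finset C),
      CStep (G₁, HS₁ ∪ HS₂ ∪ S) (HP₁, HS₁) (G₁', HS₂ ∪ S) →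
      CStep (G₂, HS₁ ∪ HS₂ ∪ S) (HP₂, HS₂) (G₂', HS₁ ∪ S) →
      HP₁ ⊆ S → HP₂ ⊆ S →
      CStep (G₁ + G₂ + Gr, HS₁ ∪ HS₂ ∪ S) (HP₁ ∪ HP₂, HS₁ ∪ HS₂)
            (G₁' + G₂' + Gr, S))
    (k : ℕ) (hk : 2 ≤ k)
    (G G' : Fin k → Multiset Gl) (Gr : Multiset Gl)
    (HP HS : Fin k → Finset C) (S : Finset C)
    -- mutually non-overlapping: the simplified parts are pairwise disjoint
    (hdisj : ∀ i j : Fin k, i ≠ j → Disjoint (HS i) (HS j))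
    -- and disjoint from the shared part of the store
    (hdisjS : ∀ i : Fin k, Disjoint (HS i) S)
    -- propagated parts lie in the shared store
    (hprop : ∀ i : Fin k, HP i ⊆ S)
    -- the k individual concurrent derivation steps on the shared store
    (hstep : ∀ i : Fin k,
      CStep (G i, (Finset.univ.biUnion HS) ∪ S) (HP i, HS i)
            (G' i, ((Finset.univ.biUnion HS) \ HS i) ∪ S)) :
    CStep ((∑ i, G i) + Gr, (Finset.univ.biUnion HS) ∪ S)
          (Finset.univ.biUnion HP, Finset.univ.biUnion HS)
          ((∑ i, G' i) + Gr, S) := by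
  classical
  set U : Finset C := Finset.univ.biUnion HS with hU
  -- main claim by induction on the index set T
  have main : ∀ T : Finset (Fin k), T.Nonempty →
      CStep ((∑ i ∈ T, G i), U ∪ S) (T.biUnion HP, T.biUnion HS)
            ((∑ i ∈ T, G' i), (U \ T.biUnion HS) ∪ S) := by
    intro T
    induction T using Finset.induction_on with
    | empty => intro h; exact absurd h (by simp)
    | @insert j T' hj ih =>
      intro _
      rcases T'.eq_empty_or_nonempty with rfl | hne
      · simpa using hstep j
      · -- combine ih with hstep j via hGC
        have hdj : Disjoint (T'.biUnion HS) (HS j) := by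
          rw [Finset.disjoint_biUnion_left]
          intro i hi
          exact hdisj i j (by rintro rfl; exact hj hi)
        have hsubU : ∀ T : Finset (Fin k), T.biUnion HS ⊆ U := by
          intro T x hx
          simp only [hU, Finset.mem_biUnion] at hx ⊢
          obtain ⟨i, _, hxi⟩ := hx
          exact ⟨i, Finset.mem_univ i, hxi⟩
        set HS₁ := T'.biUnion HS
        set HS₂ := HS j
        set S₀ := (U \ (HS₁ ∪ HS₂)) ∪ S with hS₀
        have e1 : HS₁ ∪ HS₂ ∪ S₀ = U ∪ S := by
          have h1 : HS₁ ⊆ U := hsubU T'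
          have h2 : HS₂ ⊆ U := by
            intro x hx
            simp only [hU, Finset.mem_biUnion]
            exact ⟨j, Finset.mem_univ j, hx⟩
          ext x
          simp only [hS₀, Finset.mem_union, Finset.mem_sdiff]
          constructor
          · rintro ((h | h) | (⟨h, _⟩ | h)) <;> tauto
          · rintro (h | h)
            · by_cases h1 : x ∈ HS₁ <;> by_cases h2 : x ∈ HS₂ <;> tauto
            · tauto
        have e2 : HS₂ ∪ S₀ = (U \ HS₁) ∪ S := by
          have h2 : HS₂ ⊆ U := by
            intro x hx
            simp only [hU, Finset.mem_biUnion]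
            exact ⟨j, Finset.mem_univ j, hx⟩
          ext x
          simp only [hS₀, Finset.mem_union, Finset.mem_sdiff]
          constructor
          · rintro (h | (⟨hu, hn⟩ | h))
            · exact Or.inl ⟨h2 h, fun hx => hdj.forall_ne_finset hx h rfl⟩
            · exact Or.inl ⟨hu, fun hx => hn (Or.inl hx)⟩
            · tauto
          · rintro (⟨hu, hn⟩ | h)
            · by_cases h2 : x ∈ HS₂ <;> tauto
            · tauto
        have e3 : HS₁ ∪ S₀ = (U \ HS₂) ∪ S := by
          have h1 : HS₁ ⊆ U := hsubU T'
          ext x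
          simp only [hS₀, Finset.mem_union, Finset.mem_sdiff]
          constructor
          · rintro (h | (⟨hu, hn⟩ | h))
            · exact Or.inl ⟨h1 h, fun hx => hdj.forall_ne_finset h hx rfl⟩
            · exact Or.inl ⟨hu, fun hx => hn (Or.inr hx)⟩
            · tauto
          · rintro (⟨hu, hn⟩ | h)
            · by_cases h1 : x ∈ HS₁ <;> tauto
            · tauto
        have step1 := ih hne
        have step2 := hstep j
        rw [show (U \ HS₁) ∪ S = HS₂ ∪ S₀ from e2.symm,
            show U ∪ S = HS₁ ∪ HS₂ ∪ S₀ from e1.symm] at step1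
        rw [show (U \ HS₂) ∪ S = HS₁ ∪ S₀ from e3.symm,
            show U ∪ S = HS₁ ∪ HS₂ ∪ S₀ from e1.symm] at step2
        have hP1 : T'.biUnion HP ⊆ S₀ := by
          intro x hx
          simp only [Finset.mem_biUnion] at hx
          obtain ⟨i, _, hxi⟩ := hx
          exact Finset.mem_union_right _ (hprop i hxi)
        have hP2 : HP j ⊆ S₀ := fun x hx => Finset.mem_union_right _ (hprop j hx)
        have := hGC _ _ _ _ 0 _ _ _ _ _ step1 step2 hP1 hP2
        simp only [add_zero] at this
        have eG : ∑ i ∈ insert j T', G i = (∑ i ∈ T', G i) + G j := by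
          rw [Finset.sum_insert hj]; exact add_comm _ _
        have eG' : ∑ i ∈ insert j T', G' i = (∑ i ∈ T', G' i) + G' j := by
          rw [Finset.sum_insert hj]; exact add_comm _ _
        have eP : (insert j T').biUnion HP = T'.biUnion HP ∪ HP j := by
          rw [Finset.biUnion_insert]; exact Finset.union_comm _ _
        have eS : (insert j T').biUnion HS = HS₁ ∪ HS₂ := by
          rw [Finset.biUnion_insert]; exact Finset.union_comm _ _
        rw [eG, eG', eP, eS, ← e1]
        exact this
  -- last step: split off index 0 and combine with Gr
  have h0 : (0 : ℕ) < k := by omega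
  set j₀ : Fin k := ⟨0, h0⟩
  set T' : Finset (Fin k) := Finset.univ.erase j₀ with hT'
  have hT'ne : T'.Nonempty := by
    refine ⟨⟨1, by omega⟩, ?_⟩
    simp [hT', j₀, Finset.mem_erase, Fin.ext_iff]
  have hins : insert j₀ T' = Finset.univ := by
    simp [hT', Finset.insert_erase (Finset.mem_univ j₀)]
  have step1 := main T' hT'ne
  have step2 := hstep j₀
  have hdj : Disjoint (T'.biUnion HS) (HS j₀) := by
    rw [Finset.disjoint_biUnion_left]
    intro i hi
    exact hdisj i j₀ (Finset.ne_of_mem_erase hi)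
  have hpart1 : T'.biUnion HS ∪ HS j₀ = U := by
    rw [Finset.union_comm, ← Finset.biUnion_insert, hins]
  have e2 : (U \ T'.biUnion HS) ∪ S = HS j₀ ∪ S := by
    congr 1
    rw [← hpart1, Finset.union_sdiff_cancel_left hdj]
  have e3 : (U \ HS j₀) ∪ S = T'.biUnion HS ∪ S := by
    congr 1
    rw [← hpart1, Finset.union_sdiff_cancel_right hdj]
  rw [e2] at step1
  rw [e3] at step2
  have eU : U ∪ S = T'.biUnion HS ∪ HS j₀ ∪ S := by rw [hpart1]
  rw [eU] at step1 step2 ⊢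
  have hP1 : T'.biUnion HP ⊆ S := by
    intro x hx
    simp only [Finset.mem_biUnion] at hx
    obtain ⟨i, _, hxi⟩ := hx
    exact hprop i hxi
  have := hGC _ _ _ _ Gr _ _ _ _ _ step1 step2 hP1 (hprop j₀)
  have eG : ∑ i, G i = (∑ i ∈ T', G i) + G j₀ := by
    rw [← hins, Finset.sum_insert (Finset.notMem_erase j₀ _)]; exact add_comm _ _
  have eG' : ∑ i, G' i = (∑ i ∈ T', G' i) + G' j₀ := by
    rw [← hins, Finset.sum_insert (Finset.notMem_erase j₀ _)]; exact add_comm _ _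
  have eP : Finset.univ.biUnion HP = T'.biUnion HP ∪ HP j₀ := by
    rw [← hins, Finset.biUnion_insert]; exact Finset.union_comm _ _
  have eS : U = T'.biUnion HS ∪ HS j₀ := hpart1.symm
  rw [eG, eG', eP, eS]
  exact this
end

section
/- Monotonicity of goals: if ⟨G, Sn⟩ ⤳*_G ⟨G', Sn'⟩ in the sequential goal-based CHR semantics, then for any additional goal multiset G'', ⟨G ⊎ G'', Sn⟩ ⤳*_G ⟨G' ⊎ G'', Sn'⟩. -/
/-- A single step of the sequential goal-based CHR semantics: it consumes one
distinguished goal `g`, produces new goals `G₀` and updates the store, and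
it neither inspects nor modifies the remaining goal context. `Loc g G₀ Sn Sn'`
records the admissible local rule instances (Solve, Activate, Simplify,
Propagate, Drop). -/
def GoalStep {Gl St : Type*} (Loc : Gl → Multiset Gl → St → St → Prop) :
    Multiset Gl × St → Multiset Gl × St → Prop :=
  fun σ σ' => ∃ (g : Gl) (G₀ G : Multiset Gl) (Sn Sn' : St),
    Loc g G₀ Sn Sn' ∧ σ = ({g} + G, Sn) ∧ σ' = (G₀ + G, Sn')

lemma goalStep_mono {Gl St : Type*} (Loc : Gl → Multiset Gl → St → St → Prop)
    (G'' : Multiset Gl) {σ σ' : Multiset Gl × St} (h : GoalStep Loc σ σ') :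
    GoalStep Loc (σ.1 + G'', σ.2) (σ'.1 + G'', σ'.2) := by
  obtain ⟨g, G₀, G, Sn, Sn', hl, rfl, rfl⟩ := h
  exact ⟨g, G₀, G + G'', Sn, Sn', hl, by simp [add_assoc], by simp [add_assoc]⟩

/-- Monotonicity of goals in the goal-based semantics: any derivation remains
valid if the goal multiset is extended by additional goals `G''`. -/
theorem goal_monotonicity {Gl St : Type*}
    (Loc : Gl → Multiset Gl → St → St → Prop)
    (G G' G'' : Multiset Gl) (Sn Sn' : St)
    (h : Relation.ReflTransGen (GoalStep Loc) (G, Sn) (G', Sn')) :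
    Relation.ReflTransGen (GoalStep Loc) (G + G'', Sn) (G' + G'', Sn') := by
  have : ∀ σ σ' : Multiset Gl × St, Relation.ReflTransGen (GoalStep Loc) σ σ' →
      Relation.ReflTransGen (GoalStep Loc) (σ.1 + G'', σ.2) (σ'.1 + G'', σ'.2) := by
    intro σ σ' h
    induction h with
    | refl => exact Relation.ReflTransGen.refl
    | tail _ hstep ih => exact ih.tail (goalStep_mono Loc G'' hstep)
  exact this (G, Sn) (G', Sn') h
end

section
/- Sequential reachability of concurrent derivation steps: assuming (a) goal monotonicity (⟨G,Sn⟩ ⤳*_G ⟨G',Sn'⟩ implies ⟨G⊎G'',Sn⟩ ⤳*_G ⟨G'⊎G'',Sn'⟩) and (b) isolation of transitive derivations, every single concurrent derivation step σ ⤳_{∥G}^δ σ' built from sequential steps via Lift and Goal-Concurrency can be replicated by a sequence of sequential goal-based derivation steps σ ⤳*_G σ' with the same side-effect δ. -/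
/-- Transitive closure of sequential goal-based derivation steps,
accumulating side-effects by unioning the propagated and the simplified
components. -/
inductive SeqStar {Gl C : Type*} [DecidableEq C]
    (SStep : Multiset Gl × Finset C → Finset C × Finset C →
             Multiset Gl × Finset C → Prop) :
    Multiset Gl × Finset C → Finset C × Finset C →
    Multiset Gl × Finset C → Prop
  | refl (σ : Multiset Gl × Finset C) : SeqStar SStep σ (∅, ∅) σ
  | head {σ σ' σ'' : Multiset Gl × Finset C} {HP₁ HS₁ HP₂ HS₂ : Finset C} :
      SStep σ (HP₁, HS₁) σ' → SeqStar SStep σ' (HP₂, HS₂) σ'' →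
      SeqStar SStep σ (HP₁ ∪ HP₂, HS₁ ∪ HS₂) σ''

/-- A single concurrent goal-based derivation step, built from sequential
steps via the `Lift` and (binary) `Goal-Concurrency` rules. -/
inductive ConcStep {Gl C : Type*} [DecidableEq C]
    (SStep : Multiset Gl × Finset C → Finset C × Finset C →
             Multiset Gl × Finset C → Prop) :
    Multiset Gl × Finset C → Finset C × Finset C →
    Multiset Gl × Finset C → Prop
  | lift {σ σ' δ} : SStep σ δ σ' → ConcStep SStep σ δ σ'
  | conc {G₁ G₁' G₂ G₂' Gr : Multiset Gl} {HP₁ HP₂ HS₁ HS₂ S : Finset C} :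
      ConcStep SStep (G₁, HS₁ ∪ HS₂ ∪ S) (HP₁, HS₁) (G₁', HS₂ ∪ S) →
      ConcStep SStep (G₂, HS₁ ∪ HS₂ ∪ S) (HP₂, HS₂) (G₂', HS₁ ∪ S) →
      HP₁ ⊆ S → HP₂ ⊆ S →
      ConcStep SStep (G₁ + G₂ + Gr, HS₁ ∪ HS₂ ∪ S) (HP₁ ∪ HP₂, HS₁ ∪ HS₂)
               (G₁' + G₂' + Gr, S)

lemma SeqStar.trans' {Gl C : Type*} [DecidableEq C]
    {SStep : Multiset Gl × Finset C → Finset C × Finset C →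
             Multiset Gl × Finset C → Prop}
    {σ σ' σ'' : Multiset Gl × Finset C} {δ₁ δ₂ : Finset C × Finset C}
    (h₁ : SeqStar SStep σ δ₁ σ') (h₂ : SeqStar SStep σ' δ₂ σ'') :
    SeqStar SStep σ (δ₁.1 ∪ δ₂.1, δ₁.2 ∪ δ₂.2) σ'' := by
  induction h₁ with
  | refl => simpa using h₂
  | head hs _ ih =>
      have := SeqStar.head hs (ih h₂)
      simpa [Finset.union_assoc] using this


/-- Sequential reachability of concurrent derivation steps: assuming goal
monotonicity and isolation of transitive derivations, every concurrent
derivation step can be replicated by a sequence of sequential goal-based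
derivation steps with the same side-effect. -/
theorem concurrent_step_sequentially_reachable {Gl C : Type*} [DecidableEq C]
    (SStep : Multiset Gl × Finset C → Finset C × Finset C →
             Multiset Gl × Finset C → Prop)
    -- (a) monotonicity of goals
    (hMono : ∀ (G G' G'' : Multiset Gl) (Sn Sn' : Finset C)
        (δ : Finset C × Finset C),
      SeqStar SStep (G, Sn) δ (G', Sn') →
      SeqStar SStep (G + G'', Sn) δ (G' + G'', Sn'))
    -- (b) isolation of transitive derivations
    (hIso : ∀ (G G' : Multiset Gl) (HP HS S₁ S₁' S₂ : Finset C),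
      Disjoint S₂ (HP ∪ HS) →
      SeqStar SStep (G, HP ∪ HS ∪ S₁ ∪ S₂) (HP, HS) (G', HP ∪ S₁' ∪ S₂) →
      SeqStar SStep (G, HP ∪ HS ∪ S₁) (HP, HS) (G', HP ∪ S₁'))
    (σ σ' : Multiset Gl × Finset C) (δ : Finset C × Finset C)
    (h : ConcStep SStep σ δ σ') :
    SeqStar SStep σ δ σ' := by
  induction h with
  | @lift σ σ' δ hs =>
      obtain ⟨HP, HS⟩ := δ
      simpa using SeqStar.head hs (SeqStar.refl σ')
  | @conc G₁ G₁' G₂ G₂' Gr HP₁ HP₂ HS₁ HS₂ S _ _ hp1 hp2 ih₁ ih₂ =>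
      -- Step A: run the first derivation with the other goals alongside.
      have A : SeqStar SStep (G₁ + G₂ + Gr, HS₁ ∪ HS₂ ∪ S) (HP₁, HS₁)
          (G₁' + (G₂ + Gr), HS₂ ∪ S) := by
        have := hMono G₁ G₁' (G₂ + Gr) _ _ _ ih₁
        rwa [← add_assoc] at this
      -- Step B: run the second derivation, isolated from HS₁.
      have B : SeqStar SStep (G₁' + (G₂ + Gr), HS₂ ∪ S) (HP₂, HS₂)
          (G₁' + G₂' + Gr, S ∪ (HS₁ ∩ HS₂)) := by
        have B0 := hMono G₂ G₂' (G₁' + Gr) _ _ _ ih₂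
        have e₁ : HP₂ ∪ HS₂ ∪ S ∪ (HS₁ \ (HS₂ ∪ S)) = HS₁ ∪ HS₂ ∪ S := by
          ext x
          have hx : x ∈ HP₂ → x ∈ S := @hp2 x
          simp only [Finset.mem_union, Finset.mem_sdiff]
          tauto
        have e₂ : HP₂ ∪ (S ∪ (HS₁ ∩ HS₂)) ∪ (HS₁ \ (HS₂ ∪ S)) = HS₁ ∪ S := by
          ext x
          have hx : x ∈ HP₂ → x ∈ S := @hp2 x
          simp only [Finset.mem_union, Finset.mem_sdiff, Finset.mem_inter]
          tauto
        have hdisj : Disjoint (HS₁ \ (HS₂ ∪ S)) (HP₂ ∪ HS₂) := by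
          rw [Finset.disjoint_left]
          intro x hx hx'
          have hx2 : x ∈ HP₂ → x ∈ S := @hp2 x
          simp only [Finset.mem_union, Finset.mem_sdiff] at hx hx'
          tauto
        have B1 := hIso (G₂ + (G₁' + Gr)) (G₂' + (G₁' + Gr)) HP₂ HS₂
          S (S ∪ (HS₁ ∩ HS₂)) (HS₁ \ (HS₂ ∪ S)) hdisj (by rwa [e₁, e₂])
        have e₃ : HP₂ ∪ HS₂ ∪ S = HS₂ ∪ S := by
          rw [Finset.union_assoc, Finset.union_comm HS₂,
            ← Finset.union_assoc, Finset.union_eq_right.mpr hp2]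
        have e₄ : HP₂ ∪ (S ∪ (HS₁ ∩ HS₂)) = S ∪ (HS₁ ∩ HS₂) := by
          rw [← Finset.union_assoc, Finset.union_eq_right.mpr hp2]
        rw [e₃, e₄] at B1
        have eg₁ : G₂ + (G₁' + Gr) = G₁' + (G₂ + Gr) := by
          rw [← add_assoc, add_comm G₂ G₁', add_assoc]
        have eg₂ : G₂' + (G₁' + Gr) = G₁' + G₂' + Gr := by
          rw [← add_assoc, add_comm G₂' G₁']
        rwa [eg₁, eg₂] at B1
      -- Step C: clean up the leftover HS₁ ∩ HS₂ in the store using hIso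
      -- applied to a reflexive derivation.
      have C : SeqStar SStep (G₁' + G₂' + Gr, S ∪ (HS₁ ∩ HS₂)) (∅, ∅)
          (G₁' + G₂' + Gr, S) := by
        have hdisj : Disjoint (HS₁ ∩ HS₂) ((∅ : Finset C) ∪ ∅) := by simp
        have hrefl : SeqStar SStep
            (G₁' + G₂' + Gr, (∅ : Finset C) ∪ ∅ ∪ (S ∪ (HS₁ ∩ HS₂)) ∪ (HS₁ ∩ HS₂))
            (∅, ∅) (G₁' + G₂' + Gr, (∅ : Finset C) ∪ S ∪ (HS₁ ∩ HS₂)) := by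
          have e : (∅ : Finset C) ∪ ∅ ∪ (S ∪ (HS₁ ∩ HS₂)) ∪ (HS₁ ∩ HS₂)
              = (∅ : Finset C) ∪ S ∪ (HS₁ ∩ HS₂) := by
            ext x; simp only [Finset.mem_union, Finset.mem_inter,
              Finset.notMem_empty]; tauto
          rw [e]
          exact SeqStar.refl _
        have := hIso (G₁' + G₂' + Gr) (G₁' + G₂' + Gr) ∅ ∅
          (S ∪ (HS₁ ∩ HS₂)) S (HS₁ ∩ HS₂) hdisj hrefl
        simpa using this
      have := SeqStar.trans' A (SeqStar.trans' B C)
      simpa using this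
end

section
/- Each goal-based Simplify or Propagate step maps to a single Rewrite step in the abstract semantics on the abstracted stores: if ⟨G,Sn⟩ steps to ⟨G',Sn'⟩ by Simplify or Propagate, then NoIds(G) ⊎ DropIds(Sn) ⤳_A NoIds(G') ⊎ DropIds(Sn'). -/
/-- Goal/store constraints: unnumbered CHR constraints, equations and
numbered constraints `c#i`. -/
inductive GC (C E : Type) where
  | chr (c : C)
  | eqn (e : E)
  | num (c : C) (i : ℕ)

/-- `NoIds` keeps unnumbered CHR constraints and equations of a goal
multiset, dropping numbered constraints. -/
def NoIds {C E : Type} (G : Multiset (GC C E)) : Multiset (C ⊕ E) :=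
  G.filterMap (fun g => match g with
    | GC.chr c => some (Sum.inl c)
    | GC.eqn e => some (Sum.inr e)
    | GC.num _ _ => none)

/-- `DropIds` strips identifiers of numbered constraints and keeps
equations. -/
def DropIds {C E : Type} (Sn : Multiset (GC C E)) : Multiset (C ⊕ E) :=
  Sn.filterMap (fun s => match s with
    | GC.chr _ => none
    | GC.eqn e => some (Sum.inr e)
    | GC.num c _ => some (Sum.inl c))

/-- Turn a body instance (constraints and equations) into goals. -/
def toGoals {C E : Type} (B : Multiset (C ⊕ E)) : Multiset (GC C E) :=
  B.map (fun b => match b with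
    | Sum.inl c => GC.chr c
    | Sum.inr e => GC.eqn e)

/-- Equations of an abstract store. -/
def EqsA {C E : Type} (S : Multiset (C ⊕ E)) : Set E :=
  {e | Sum.inr e ∈ S}

/-- Equations of a (numbered) goal-based store. -/
def EqsSt {C E : Type} (Sn : Multiset (GC C E)) : Set E :=
  {e | GC.eqn e ∈ Sn}

/-- A CHR rule with propagated head patterns, simplified head patterns,
a guard and a body. -/
structure CHRRule (Pat Guard Body : Type) where
  hp : Multiset Pat
  hs : Multiset Pat
  guard : Guard
  body : Body

section

variable {C E Pat Guard Body Sub : Type}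
  (Prog : Set (CHRRule Pat Guard Body))
  (applyC : Sub → Pat → C)
  (applyG : Sub → Guard → Guard)
  (applyB : Sub → Body → Multiset (C ⊕ E))
  (entail : Set E → Guard → Prop)

/-- The abstract CHR Rewrite step. -/
inductive ARew : Multiset (C ⊕ E) → Multiset (C ⊕ E) → Prop
  | step (r : CHRRule Pat Guard Body) (hr : r ∈ Prog) (φ : Sub)
      (S : Multiset (C ⊕ E))
      (hg : entail (EqsA S) (applyG φ r.guard)) :
      ARew ((r.hp.map (applyC φ)).map Sum.inl +
              (r.hs.map (applyC φ)).map Sum.inl + S)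
           ((r.hp.map (applyC φ)).map Sum.inl + applyB φ r.body + S)

/-- The goal-based Simplify and Propagate steps, executed on an active
numbered goal `c#j` with matching partner constraints in the store. -/
inductive SPStep :
    Multiset (GC C E) × Multiset (GC C E) →
    Multiset (GC C E) × Multiset (GC C E) → Prop
  | simplify (r : CHRRule Pat Guard Body) (hr : r ∈ Prog) (φ : Sub)
      (c : C) (j : ℕ) (G HP HS Sn : Multiset (GC C E))
      (hhp : (r.hp.map (applyC φ)).map Sum.inl = DropIds HP)
      (hhs : (r.hs.map (applyC φ)).map Sum.inl = Sum.inl c ::ₘ DropIds HS)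
      (hg : entail (EqsSt Sn) (applyG φ r.guard)) :
      SPStep (GC.num c j ::ₘ G, GC.num c j ::ₘ (HP + HS + Sn))
             (toGoals (applyB φ r.body) + G, HP + Sn)
  | propagate (r : CHRRule Pat Guard Body) (hr : r ∈ Prog) (φ : Sub)
      (c : C) (j : ℕ) (G HP HS Sn : Multiset (GC C E))
      (hhp : (r.hp.map (applyC φ)).map Sum.inl = Sum.inl c ::ₘ DropIds HP)
      (hhs : (r.hs.map (applyC φ)).map Sum.inl = DropIds HS)
      (hg : entail (EqsSt Sn) (applyG φ r.guard)) :
      SPStep (GC.num c j ::ₘ G, GC.num c j ::ₘ (HP + HS + Sn))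
             (toGoals (applyB φ r.body) + (GC.num c j ::ₘ G),
              GC.num c j ::ₘ (HP + Sn))

lemma filterMap_add' {α β : Type*} (f : α → Option β) (a b : Multiset α) :
    Multiset.filterMap f (a + b) = Multiset.filterMap f a + Multiset.filterMap f b := by
  induction a using Multiset.induction_on with
  | empty => simp
  | cons x s ih =>
    rcases h : f x with _ | y
    · simp [Multiset.cons_add, Multiset.filterMap_cons_none _ _ h, ih]
    · simp [Multiset.cons_add, Multiset.filterMap_cons_some _ _ _ h, ih]

lemma DropIds_add (a b : Multiset (GC C E)) :
    DropIds (a + b) = DropIds a + DropIds b := filterMap_add' _ _ _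

lemma DropIds_num (c : C) (j : ℕ) (s : Multiset (GC C E)) :
    DropIds (GC.num c j ::ₘ s) = Sum.inl c ::ₘ DropIds s := by
  simp [DropIds]

lemma NoIds_add (a b : Multiset (GC C E)) :
    NoIds (a + b) = NoIds a + NoIds b := filterMap_add' _ _ _

lemma NoIds_num (c : C) (j : ℕ) (s : Multiset (GC C E)) :
    NoIds (GC.num c j ::ₘ s) = NoIds s := by
  simp [NoIds]

lemma NoIds_toGoals (B : Multiset (C ⊕ E)) : NoIds (toGoals B) = B := by
  simp only [NoIds, toGoals, Multiset.filterMap_map]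
  convert Multiset.filterMap_some B using 2
  ext b; cases b <;> rfl

lemma EqsSt_eq_EqsA_DropIds (s : Multiset (GC C E)) :
    EqsSt s = EqsA (DropIds s) := by
  ext e
  simp only [EqsSt, EqsA, DropIds, Set.mem_setOf_eq, Multiset.mem_filterMap]
  constructor
  · intro h; exact ⟨GC.eqn e, h, rfl⟩
  · rintro ⟨g, hg, he⟩
    cases g <;> simp_all

/-- Each Simplify or Propagate step maps to a single abstract Rewrite step
on the abstracted stores, assuming guard entailment is monotonic under store
extension. -/
theorem sp_maps_to_rewrite
    (hEntailMono : ∀ (E₁ E₂ : Set E) (g : Guard),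
      entail E₁ g → E₁ ⊆ E₂ → entail E₂ g)
    (G Sn G' Sn' : Multiset (GC C E))
    (h : SPStep Prog applyC applyG applyB entail (G, Sn) (G', Sn')) :
    ARew Prog applyC applyG applyB entail
      (NoIds G + DropIds Sn) (NoIds G' + DropIds Sn') := by
  cases h with
  | simplify r hr φ c j G HP HS Sn hhp hhs hg =>
      have hg' : entail (EqsA (NoIds G + DropIds Sn)) (applyG φ r.guard) := by
        refine hEntailMono _ _ _ hg ?_
        rw [EqsSt_eq_EqsA_DropIds]
        intro e he
        simp only [EqsA, Set.mem_setOf_eq, Multiset.mem_add] at *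
        exact Or.inr he
      have := ARew.step (Prog := Prog) (applyC := applyC) (applyG := applyG)
        (applyB := applyB) (entail := entail) r hr φ (NoIds G + DropIds Sn) hg'
      have e1 : (Multiset.map Sum.inl (Multiset.map (applyC φ) r.hp)) +
          (Multiset.map Sum.inl (Multiset.map (applyC φ) r.hs)) +
          (NoIds G + DropIds Sn) =
          NoIds (GC.num c j ::ₘ G) + DropIds (GC.num c j ::ₘ (HP + HS + Sn)) := by
        rw [hhp, hhs, NoIds_num, DropIds_num, DropIds_add, DropIds_add]
        simp only [← Multiset.singleton_add]
        abel
      have e2 : (Multiset.map Sum.inl (Multiset.map (applyC φ) r.hp)) +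
          applyB φ r.body + (NoIds G + DropIds Sn) =
          NoIds (toGoals (applyB φ r.body) + G) + DropIds (HP + Sn) := by
        rw [hhp, NoIds_add, NoIds_toGoals, DropIds_add]
        abel
      rwa [e1, e2] at this
  | propagate r hr φ c j G HP HS Sn hhp hhs hg =>
      have hg' : entail (EqsA (NoIds G + DropIds Sn))
          (applyG φ r.guard) := by
        refine hEntailMono _ _ _ hg ?_
        rw [EqsSt_eq_EqsA_DropIds]
        intro e he
        simp only [EqsA, Set.mem_setOf_eq, Multiset.mem_add] at *
        exact Or.inr he
      have := ARew.step (Prog := Prog) (applyC := applyC) (applyG := applyG)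
        (applyB := applyB) (entail := entail) r hr φ
        (NoIds G + DropIds Sn) ?_
      · have e1 : (Multiset.map Sum.inl (Multiset.map (applyC φ) r.hp)) +
            (Multiset.map Sum.inl (Multiset.map (applyC φ) r.hs)) +
            (NoIds G + DropIds Sn) =
            NoIds (GC.num c j ::ₘ G) + DropIds (GC.num c j ::ₘ (HP + HS + Sn)) := by
          rw [hhp, hhs, NoIds_num, DropIds_num, DropIds_add, DropIds_add]
          simp only [← Multiset.singleton_add]
          abel
        have e2 : (Multiset.map Sum.inl (Multiset.map (applyC φ) r.hp)) +
            applyB φ r.body + (NoIds G + DropIds Sn) =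
            NoIds (toGoals (applyB φ r.body) + (GC.num c j ::ₘ G)) +
            DropIds (GC.num c j ::ₘ (HP + Sn)) := by
          rw [hhp, NoIds_add, NoIds_toGoals, NoIds_num, DropIds_num, DropIds_add]
          simp only [← Multiset.singleton_add]
          abel
        rwa [e1, e2] at this
      · exact hg'

end
end

section
/- Correspondence of termination: for a terminating CHR program, an initial CHR state ⟨G,∅⟩, and a final CHR state ⟨∅,Sn⟩, if ⟨G,∅⟩ ⤳*_{∥G} ⟨∅,Sn⟩ in the concurrent goal-based semantics, then G ⤳*_A DropIds(Sn) in the abstract semantics and DropIds(Sn) is a final store (no abstract Rewrite step applies). -/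
/-- Correspondence of termination: for a terminating CHR program, any
concurrent goal-based derivation from an initial state to a final state
(empty goals) corresponds to an abstract derivation ending in a final
abstract store. -/
theorem correspondence_of_termination {C E : Type}
    (GStep CStep : Multiset (GC C E) × Multiset (GC C E) →
                   Multiset (GC C E) × Multiset (GC C E) → Prop)
    (AStep : Multiset (C ⊕ E) → Multiset (C ⊕ E) → Prop)
    (IsHeadInst : Multiset (GC C E) → Multiset (GC C E) → Prop)
    -- the CHR program is terminating: no infinite abstract derivations
    (hTerm : ∀ f : ℕ → Multiset (C ⊕ E), ¬ ∀ n, AStep (f n) (f (n + 1)))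
    -- (1) sequential reachability of concurrent derivations
    (hSeq : ∀ σ σ', Relation.ReflTransGen CStep σ σ' →
      Relation.ReflTransGen GStep σ σ')
    -- (2) correspondence of sequential derivations
    (hCorr : ∀ (G Sn G' Sn' : Multiset (GC C E)),
      Relation.ReflTransGen GStep (G, Sn) (G', Sn') →
      NoIds G + DropIds Sn = NoIds G' + DropIds Sn' ∨
      Relation.ReflTransGen AStep (NoIds G + DropIds Sn)
        (NoIds G' + DropIds Sn'))
    -- (3) in any sequentially reachable state every rule head instance of
    -- the store contains a numbered constraint that is also a goal
    (hActive : ∀ (G₀ G Sn : Multiset (GC C E)),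
      (∀ (c : C) (i : ℕ), GC.num c i ∉ G₀) →
      Relation.ReflTransGen GStep (G₀, 0) (G, Sn) →
      ∀ H, IsHeadInst Sn H →
        ∃ (c : C) (i : ℕ), GC.num c i ∈ H ∧ GC.num c i ∈ G)
    -- rule head instances in Sn correspond exactly to applicable Rewrite
    -- steps on DropIds Sn
    (hInst : ∀ Sn : Multiset (GC C E),
      (∃ T, AStep (DropIds Sn) T) ↔ ∃ H, IsHeadInst Sn H)
    (G Sn : Multiset (GC C E))
    -- initial state: all constraints are goals, none numbered
    (hinit : ∀ (c : C) (i : ℕ), GC.num c i ∉ G)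
    (h : Relation.ReflTransGen CStep (G, 0) (0, Sn)) :
    Relation.ReflTransGen AStep (NoIds G) (DropIds Sn) ∧
    ∀ T, ¬ AStep (DropIds Sn) T := by
  have hg := hSeq _ _ h
  have hc := hCorr G 0 0 Sn hg
  simp only [NoIds, DropIds, Multiset.filterMap_zero, add_zero, zero_add] at hc
  constructor
  · unfold NoIds DropIds
    rcases hc with hc | hc
    · rw [hc]
    · exact hc
  · intro T hT
    obtain ⟨H, hH⟩ := (hInst Sn).mp ⟨T, hT⟩
    obtain ⟨c, i, -, hmem⟩ := hActive G 0 Sn hinit hg H hH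
    exact absurd hmem (Multiset.notMem_zero _)
end

section
/- For the merge sort CHR program, from the initial store {Merge(1,e₁),...,Merge(1,e_{2^k})} with 2^k distinct totally ordered elements, exhaustive application of rules merge1 and merge2 in the abstract semantics yields a final store {Merge(k+1, m)} ∪ {Leq(a₁,a₂), Leq(a₂,a₃), ..., Leq(a_{2^k-1}, a_{2^k})} where a₁ < a₂ < ... < a_{2^k} is the sorted order of the elements and m = a₁ is the minimum; in particular the Leq constraints in the final store form a linear chain in sorted order. -/
/-- Constraints of the merge sort CHR program: `Leq(a,b)` and `Merge(n,a)`. -/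
inductive MC (α : Type u) where
  | leq (a b : α)
  | mrg (n : ℕ) (a : α)

/-- The abstract CHR semantics of the merge sort program:
merge1 @ Leq(x,a) \ Leq(x,b) ⇔ a < b | Leq(a,b)
merge2 @ Merge(n,a), Merge(n,b) ⇔ a < b | Leq(a,b), Merge(n+1,a). -/
inductive MSStep {α : Type u} [LinearOrder α] :
    Multiset (MC α) → Multiset (MC α) → Prop
  | merge1 (x a b : α) (S : Multiset (MC α)) (h : a < b) :
      MSStep ({MC.leq x a, MC.leq x b} + S) ({MC.leq x a, MC.leq a b} + S)
  | merge2 (n : ℕ) (a b : α) (S : Multiset (MC α)) (h : a < b) :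
      MSStep ({MC.mrg n a, MC.mrg n b} + S)
             ({MC.leq a b, MC.mrg (n + 1) a} + S)

/-- The linear chain of `Leq` constraints along a list. -/
def leqChain {α : Type u} (l : List α) : Multiset (MC α) :=
  ↑((l.zip l.tail).map (fun p => MC.leq p.1 p.2))

deriving instance DecidableEq for MC

namespace MSaux
variable {α : Type} [LinearOrder α]

def own : MC α → α | .leq _ b => b | .mrg _ a => a
def fstc : MC α → α | .leq a _ => a | .mrg _ a => a
def lvl : MC α → ℕ | .leq _ _ => 0 | .mrg n _ => n
def isL : MC α → Prop | .leq _ _ => True | .mrg _ _ => False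
instance : DecidablePred (isL (α := α)) := fun c => by
  cases c <;> simp [isL] <;> infer_instance
def wt : MC α → ℕ | .leq _ _ => 0 | .mrg n _ => 2^n
def wm (s : Finset α) : MC α → ℕ
  | .leq u _ => (s.filter (fun c => u < c)).card
  | .mrg _ _ => s.card + 1

structure Inv (s : Finset α) (k : ℕ) (T : Multiset (MC α)) : Prop where
  own_eq : T.map own = s.val
  leq_lt : ∀ u v : α, MC.leq u v ∈ T → u < v
  leq_mem : ∀ u v : α, MC.leq u v ∈ T → u ∈ s
  wt_sum : (T.map wt).sum = 2 ^ (k + 1)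

lemma inv_step {s : Finset α} {k : ℕ} {T T' : Multiset (MC α)}
    (hI : Inv s k T) (h : MSStep T T') : Inv s k T' := by
  cases h with
  | merge1 x a b S hab =>
    have hmem : MC.leq x a ∈ ({MC.leq x a, MC.leq x b} + S) := by simp
    have ha : a ∈ s := by
      have : own (MC.leq x a) ∈ Multiset.map own ({MC.leq x a, MC.leq x b} + S) :=
        Multiset.mem_map_of_mem own hmem
      rw [hI.own_eq] at this; exact this
    refine ⟨?_, ?_, ?_, ?_⟩
    · rw [← hI.own_eq]; simp [own]
    · intro u v hm
      simp only [Multiset.mem_add, Multiset.insert_eq_cons, Multiset.mem_cons,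
        Multiset.mem_singleton] at hm
      rcases hm with (⟨rfl, rfl⟩ | ⟨rfl, rfl⟩) | h1
      · exact hI.leq_lt _ _ (by simp)
      · exact hab
      · exact hI.leq_lt u v (by simp [h1])
    · intro u v hm
      simp only [Multiset.mem_add, Multiset.insert_eq_cons, Multiset.mem_cons,
        Multiset.mem_singleton] at hm
      rcases hm with (⟨rfl, rfl⟩ | ⟨rfl, rfl⟩) | h1
      · exact hI.leq_mem x a (by simp)
      · exact ha
      · exact hI.leq_mem u v (by simp [h1])
    · rw [← hI.wt_sum]; simp [wt]
  | merge2 n a b S hab =>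
    have hmem : MC.mrg n a ∈ ({MC.mrg n a, MC.mrg n b} + S) := by simp
    have ha : a ∈ s := by
      have : own (MC.mrg n a) ∈ Multiset.map own ({MC.mrg n a, MC.mrg n b} + S) :=
        Multiset.mem_map_of_mem own hmem
      rw [hI.own_eq] at this; exact this
    refine ⟨?_, ?_, ?_, ?_⟩
    · rw [← hI.own_eq]; simp [own]; exact Multiset.cons_swap _ _ _
    · intro u v hm
      simp only [Multiset.mem_add, Multiset.insert_eq_cons, Multiset.mem_cons,
        Multiset.mem_singleton] at hm
      rcases hm with (⟨rfl, rfl⟩ | h1) | h1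
      · exact hab
      · exact absurd h1 (by simp)
      · exact hI.leq_lt u v (by simp [h1])
    · intro u v hm
      simp only [Multiset.mem_add, Multiset.insert_eq_cons, Multiset.mem_cons,
        Multiset.mem_singleton] at hm
      rcases hm with (⟨rfl, rfl⟩ | h1) | h1
      · exact ha
      · exact absurd h1 (by simp)
      · exact hI.leq_mem u v (by simp [h1])
    · rw [← hI.wt_sum]; simp [wt, pow_succ]; ring

lemma mu_decr {s : Finset α} {k : ℕ} {T T' : Multiset (MC α)}
    (hI : Inv s k T) (h : MSStep T T') :
    (T'.map (wm s)).sum < (T.map (wm s)).sum := by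
  cases h with
  | merge1 x a b S hab =>
    have hx : x < a := hI.leq_lt x a (by simp)
    have ha : a ∈ s := by
      have : own (MC.leq x a) ∈ Multiset.map own ({MC.leq x a, MC.leq x b} + S) :=
        Multiset.mem_map_of_mem own (by simp)
      rw [hI.own_eq] at this; exact this
    have hcard : (s.filter (fun c => a < c)).card < (s.filter (fun c => x < c)).card := by
      apply Finset.card_lt_card
      constructor
      · intro c hc
        simp only [Finset.mem_filter] at hc ⊢
        exact ⟨hc.1, lt_trans hx hc.2⟩
      · intro hsub
        have : a ∈ s.filter (fun c => a < c) := hsub (by simp [ha, hx])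
        simp at this
    simp only [Multiset.insert_eq_cons, Multiset.cons_add, Multiset.map_cons,
      Multiset.sum_cons, Multiset.singleton_add, wm]
    omega
  | merge2 n a b S hab =>
    have hb : (s.filter (fun c => a < c)).card ≤ s.card := Finset.card_filter_le _ _
    simp only [Multiset.insert_eq_cons, Multiset.cons_add, Multiset.map_cons,
      Multiset.sum_cons, Multiset.singleton_add, wm]
    omega


lemma inv_init {s : Finset α} {k : ℕ} (hcard : s.card = 2 ^ k) :
    Inv s k (s.val.map (MC.mrg 1)) := by
  refine ⟨?_, ?_, ?_, ?_⟩
  · rw [Multiset.map_map]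
    exact (Multiset.map_congr rfl (fun x _ => rfl)).trans (Multiset.map_id _)
  · intro u v h
    simp only [Multiset.mem_map] at h
    obtain ⟨c, _, hc⟩ := h
    exact absurd hc (by simp)
  · intro u v h
    simp only [Multiset.mem_map] at h
    obtain ⟨c, _, hc⟩ := h
    exact absurd hc (by simp)
  · rw [Multiset.map_map]
    have : (wt ∘ MC.mrg 1) = fun _ : α => 2 := by funext x; rfl
    rw [this, Multiset.map_const', Multiset.sum_replicate, smul_eq_mul]
    have : Multiset.card s.val = 2 ^ k := hcard
    rw [this]; ring

lemma no_infinite {s : Finset α} {k : ℕ} (hcard : s.card = 2 ^ k)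
    (f : ℕ → Multiset (MC α)) (h0 : f 0 = s.val.map (MC.mrg 1))
    (hstep : ∀ n, MSStep (f n) (f (n + 1))) : False := by
  have hin : ∀ n, Inv s k (f n) := by
    intro n
    induction n with
    | zero => rw [h0]; exact inv_init hcard
    | succ n ih => exact inv_step ih (hstep n)
  have hmu : ∀ n, ((f (n+1)).map (wm s)).sum < ((f n).map (wm s)).sum :=
    fun n => mu_decr (hin n) (hstep n)
  have key : ∀ n, ((f n).map (wm s)).sum + n ≤ ((f 0).map (wm s)).sum := by
    intro n
    induction n with
    | zero => omega
    | succ n ih => have := hmu n; omega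
  have := key (((f 0).map (wm s)).sum + 1)
  omega

lemma exists_two {β : Type} [DecidableEq β] {m : Multiset β} (h : 2 ≤ Multiset.card m) :
    ∃ c₁ c₂ S, m = c₁ ::ₘ c₂ ::ₘ S ∧ c₁ ∈ m ∧ c₂ ∈ m := by
  obtain ⟨c₁, h₁⟩ := Multiset.exists_mem_of_ne_zero (s := m) (by
    intro h0; rw [h0] at h; simp at h)
  have he1 : c₁ ::ₘ m.erase c₁ = m := Multiset.cons_erase h₁
  have hc : Multiset.card (m.erase c₁) = Multiset.card m - 1 := Multiset.card_erase_of_mem h₁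
  obtain ⟨c₂, h₂⟩ := Multiset.exists_mem_of_ne_zero (s := m.erase c₁) (by
    intro h0
    have := congrArg Multiset.card h0
    simp [hc] at this; omega)
  have he2 : c₂ ::ₘ (m.erase c₁).erase c₂ = m.erase c₁ := Multiset.cons_erase h₂
  refine ⟨c₁, c₂, (m.erase c₁).erase c₂, by rw [he2, he1], h₁, Multiset.mem_of_mem_erase h₂⟩

lemma exists_dup {β γ : Type} [DecidableEq γ] {m : Multiset β} {f : β → γ}
    (h : ¬ (m.map f).Nodup) : ∃ c₁ c₂ S, m = c₁ ::ₘ c₂ ::ₘ S ∧ f c₁ = f c₂ := by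
  classical
  rw [Multiset.nodup_iff_count_le_one] at h
  push_neg at h
  obtain ⟨x, hx⟩ := h
  rw [Multiset.count_map] at hx
  obtain ⟨c₁, c₂, S₀, hS, hm1, hm2⟩ := exists_two (m := Multiset.filter (fun a => x = f a) m) (by omega)
  have hle : c₁ ::ₘ c₂ ::ₘ S₀ ≤ m := hS ▸ Multiset.filter_le _ m
  obtain ⟨u, hu⟩ := Multiset.le_iff_exists_add.mp hle
  refine ⟨c₁, c₂, S₀ + u, by rw [hu]; simp [Multiset.cons_add], ?_⟩
  have e1 := (Multiset.mem_filter.mp hm1).2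
  have e2 := (Multiset.mem_filter.mp hm2).2
  rw [← e1, ← e2]

lemma all_one {m : Multiset ℤ} (h1 : ∀ x ∈ m, 1 ≤ x)
    (h2 : m.sum ≤ Multiset.card m) : ∀ x ∈ m, x = 1 := by
  induction m using Multiset.induction with
  | empty => simp
  | cons a t ih =>
    have ha := h1 a (by simp)
    have ht : (Multiset.card t : ℤ) ≤ t.sum := by
      have := Multiset.card_nsmul_le_sum (s := t) (fun x hx => h1 x (by simp [hx]))
      simpa using this
    simp only [Multiset.sum_cons, Multiset.card_cons] at h2
    intro x hx
    rw [Multiset.mem_cons] at hx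
    rcases hx with rfl | hx
    · push_cast at h2; omega
    · exact ih (fun y hy => h1 y (by simp [hy])) (by push_cast at h2 ⊢; omega) x hx

lemma sum_range_pow : ∀ n : ℕ, (∑ i ∈ Finset.range n, 2 ^ i) = 2 ^ n - 1 := by
  intro n
  induction n with
  | zero => simp
  | succ n ih =>
    rw [Finset.sum_range_succ, ih, pow_succ]
    have : 1 ≤ 2 ^ n := Nat.one_le_two_pow
    omega

lemma pow_sum_eq {F : Finset ℕ} {k : ℕ} (h : (∑ m ∈ F, 2 ^ m) = 2 ^ k) : F = {k} := by
  have hne : F.Nonempty := by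
    by_contra hc
    rw [Finset.not_nonempty_iff_eq_empty] at hc
    rw [hc] at h
    simp at h
    have : 0 < 2 ^ k := pow_pos (by norm_num) k
    omega
  set M := F.max' hne with hM
  have h1 : 2 ^ M ≤ 2 ^ k := by
    rw [← h]
    exact Finset.single_le_sum (fun i _ => Nat.zero_le _) (F.max'_mem hne)
  have h2 : (2:ℕ) ^ k ≤ 2 ^ (M + 1) - 1 := by
    rw [← h, ← sum_range_pow]
    apply Finset.sum_le_sum_of_subset
    intro x hx
    rw [Finset.mem_range]
    exact Nat.lt_succ_of_le (F.le_max' x hx)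
  have hMk : M = k := by
    have hk1 : M ≤ k := (Nat.pow_le_pow_iff_right (by norm_num)).mp h1
    have hk2 : k ≤ M := by
      by_contra hc
      push_neg at hc
      have h5 : (2:ℕ) ^ (M + 1) ≤ 2 ^ k := Nat.pow_le_pow_right (by norm_num) (by omega)
      have h6 : 1 ≤ (2:ℕ) ^ (M + 1) := Nat.one_le_two_pow
      omega
    omega
  have hkF : k ∈ F := hMk ▸ F.max'_mem hne
  have hrest : (∑ m ∈ F.erase k, 2 ^ m) = 0 := by
    have h7 : 2 ^ k + (∑ m ∈ F.erase k, 2 ^ m) = ∑ m ∈ F, 2 ^ m :=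
      Finset.add_sum_erase F (fun m => 2 ^ m) hkF
    omega
  have hempty : F.erase k = ∅ := by
    by_contra hc
    obtain ⟨x, hx⟩ := Finset.nonempty_iff_ne_empty.mpr hc
    have h4 : 2 ^ x ≤ ∑ m ∈ F.erase k, 2 ^ m :=
      Finset.single_le_sum (fun i _ => Nat.zero_le _) hx
    have : 1 ≤ 2 ^ x := Nat.one_le_two_pow
    omega
  ext x
  simp only [Finset.mem_singleton]
  constructor
  · intro hx
    by_contra hc
    have : x ∈ F.erase k := Finset.mem_erase.mpr ⟨hc, hx⟩
    rw [hempty] at this; exact absurd this (by simp)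
  · rintro rfl; exact hkF


noncomputable def nxt (s : Finset α) (u : α) : α :=
  if h : (s.filter (fun v => u < v)).Nonempty then (s.filter (fun v => u < v)).min' h else u

def rnk (s : Finset α) (x : α) : ℤ := ((s.filter (fun c => c < x)).card : ℤ)

section Rank
variable {s : Finset α}

lemma rnk_nonneg (x : α) : 0 ≤ rnk s x := Int.ofNat_nonneg _

lemma rnk_lt {u v : α} (hu : u ∈ s) (huv : u < v) : rnk s u < rnk s v := by
  unfold rnk
  rw [Int.ofNat_lt]
  apply Finset.card_lt_card
  constructor
  · intro c hc
    simp only [Finset.mem_filter] at hc ⊢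
    exact ⟨hc.1, lt_trans hc.2 huv⟩
  · intro hsub
    have : u ∈ s.filter (fun c => c < u) := hsub (by simp [hu, huv])
    simp at this

lemma rnk_le {x : α} (hx : x ∈ s) : rnk s x ≤ (s.card : ℤ) - 1 := by
  unfold rnk
  have : (s.filter (fun c => c < x)).card < s.card := by
    apply Finset.card_lt_card
    constructor
    · exact Finset.filter_subset _ _
    · intro hsub
      have : x ∈ s.filter (fun c => c < x) := hsub hx
      simp at this
  omega

lemma rnk_zero_min {a : α} (hne : s.Nonempty) (ha : a ∈ s) (h0 : rnk s a = 0) :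
    a = s.min' hne := by
  have h1 : s.min' hne ≤ a := s.min'_le a ha
  rcases eq_or_lt_of_le h1 with h | h
  · exact h.symm
  · exfalso
    have := rnk_lt (s.min'_mem hne) h
    have := rnk_nonneg (s := s) (s.min' hne)
    omega

lemma rnk_max_max {z : α} (hne : s.Nonempty) (hz : z ∈ s) (h0 : rnk s z = (s.card : ℤ) - 1) :
    z = s.max' hne := by
  have h1 : z ≤ s.max' hne := s.le_max' z hz
  rcases eq_or_lt_of_le h1 with h | h
  · exact h
  · exfalso
    have h2 := rnk_lt hz h
    have h3 := rnk_le (s.max'_mem hne)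
    omega

lemma succ_nxt {u v : α} (hu : u ∈ s) (hv : v ∈ s) (huv : u < v)
    (hr : rnk s v = rnk s u + 1) : v = nxt s u := by
  have hvf : v ∈ s.filter (fun c => u < c) := by simp [hv, huv]
  have hne : (s.filter (fun c => u < c)).Nonempty := ⟨v, hvf⟩
  rw [nxt, dif_pos hne]
  have hmle : (s.filter (fun c => u < c)).min' hne ≤ v := Finset.min'_le _ _ hvf
  rcases eq_or_lt_of_le hmle with h | h
  · exact h.symm
  · exfalso
    have hmmem := (s.filter (fun c => u < c)).min'_mem hne
    simp only [Finset.mem_filter] at hmmem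
    have h2 := rnk_lt hmmem.1 h
    have h3 := rnk_lt hu hmmem.2
    omega

lemma sort_chain' : (s.sort (· ≤ ·)).Chain' (fun u v => v = nxt s u) := by
  unfold List.Chain'
  rw [List.isChain_iff_getElem]
  intro i hi
  set l := s.sort (· ≤ ·) with hl
  have hs := Finset.sortedLT_sort s
  have mono := hs.strictMono_get
  have hi1 : i < l.length := by omega
  have hi2 : i + 1 < l.length := by omega
  show l.get ⟨i + 1, hi2⟩ = nxt s (l.get ⟨i, hi1⟩)
  have hlt : l.get ⟨i, hi1⟩ < l.get ⟨i + 1, hi2⟩ := mono (by simp)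
  have hmem1 : l.get ⟨i, hi1⟩ ∈ s := (Finset.mem_sort _).mp (l.get_mem _)
  have hmem2 : l.get ⟨i + 1, hi2⟩ ∈ s := (Finset.mem_sort _).mp (l.get_mem _)
  set u := l.get ⟨i, hi1⟩
  have hvf : l.get ⟨i + 1, hi2⟩ ∈ s.filter (fun c => u < c) := by
    simp only [Finset.mem_filter]; exact ⟨hmem2, hlt⟩
  have hne : (s.filter (fun c => u < c)).Nonempty := ⟨_, hvf⟩
  rw [nxt, dif_pos hne]
  apply le_antisymm
  · apply Finset.le_min'
    intro y hy
    simp only [Finset.mem_filter] at hy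
    have : y ∈ l := (Finset.mem_sort _).mpr hy.1
    obtain ⟨⟨j, hj⟩, rfl⟩ := List.mem_iff_get.mp this
    have hij : (⟨i, hi1⟩ : Fin l.length) < ⟨j, hj⟩ := mono.lt_iff_lt.mp hy.2
    have : i + 1 ≤ j := hij
    exact mono.monotone (show (⟨i + 1, hi2⟩ : Fin l.length) ≤ ⟨j, hj⟩ from this)
  · exact Finset.min'_le _ _ hvf

end Rank

lemma chain_list_eq {s : Finset α} : ∀ {l : List α},
    l.Chain' (fun u v => v = nxt s u) →
    (l.zip l.tail).map (fun p => MC.leq p.1 p.2) =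
      l.dropLast.map (fun u => MC.leq u (nxt s u))
  | [], _ => rfl
  | [_], _ => rfl
  | a :: b :: t, h => by
    unfold List.Chain' at h
    rw [List.isChain_cons_cons] at h
    have ih := chain_list_eq (s := s) h.2
    simp only [List.tail_cons, List.zip_cons_cons, List.map_cons] at ih ⊢
    rw [show (a :: b :: t).dropLast = a :: (b :: t).dropLast from rfl]
    simp only [List.map_cons]
    rw [← h.1, ih]

lemma leqChain_eq {s : Finset α} {l : List α} (h : l.Chain' (fun u v => v = nxt s u)) :
    leqChain l = (l.dropLast : Multiset α).map (fun u => MC.leq u (nxt s u)) := by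
  rw [leqChain, chain_list_eq h, Multiset.map_coe]

omit [LinearOrder α] in
lemma pair_add (x y : MC α) (S : Multiset (MC α)) :
    ({x, y} : Multiset (MC α)) + S = x ::ₘ y ::ₘ S := by
  simp [Multiset.insert_eq_cons, Multiset.cons_add, Multiset.singleton_add]

lemma final_eq {s : Finset α} {k : ℕ} (hcard : s.card = 2 ^ k) {T : Multiset (MC α)}
    (hI : Inv s k T) (hfin : ∀ U, ¬ MSStep T U) (hne : s.Nonempty) :
    T = MC.mrg (k + 1) (s.min' hne) ::ₘ leqChain (s.sort (· ≤ ·)) := by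
  classical
  set Tl := T.filter isL with hTldef
  set Tm := T.filter (fun c => ¬ isL c) with hTmdef
  have hsplit : Tl + Tm = T := Multiset.filter_add_not _ _
  have hTl_leq : ∀ c ∈ Tl, ∃ u v, c = MC.leq u v := by
    intro c hc
    have h2 := (Multiset.mem_filter.mp hc).2
    cases c with
    | leq u v => exact ⟨u, v, rfl⟩
    | mrg n a => simp [isL] at h2
  have hTm_mrg : ∀ c ∈ Tm, ∃ n a, c = MC.mrg n a := by
    intro c hc
    have h2 := (Multiset.mem_filter.mp hc).2
    cases c with
    | leq u v => simp [isL] at h2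
    | mrg n a => exact ⟨n, a, rfl⟩
  have hTl_le : Tl ≤ T := Multiset.filter_le _ _
  have hTm_le : Tm ≤ T := Multiset.filter_le _ _
  have hnodup_own : (T.map own).Nodup := hI.own_eq ▸ s.nodup
  -- distinct merge levels
  have hm_nodup : (Tm.map lvl).Nodup := by
    by_contra hnd
    obtain ⟨c₁, c₂, S₀, hS, hf⟩ := exists_dup hnd
    obtain ⟨n₁, a, rfl⟩ := hTm_mrg c₁ (by rw [hS]; simp)
    obtain ⟨n₂, b, rfl⟩ := hTm_mrg c₂ (by rw [hS]; simp)
    have hn : n₁ = n₂ := hf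
    subst hn
    have hle2 : (MC.mrg n₁ a ::ₘ MC.mrg n₁ b ::ₘ 0) ≤ T := by
      refine le_trans ?_ hTm_le
      rw [hS]
      exact Multiset.cons_le_cons _ (Multiset.cons_le_cons _ (Multiset.zero_le _))
    obtain ⟨S, hT⟩ := Multiset.le_iff_exists_add.mp hle2
    rw [Multiset.cons_add, Multiset.cons_add, zero_add] at hT
    have hab : a ≠ b := by
      rintro rfl
      apply Multiset.nodup_iff_le.mp hnodup_own a
      rw [hT]
      simp only [Multiset.map_cons, own]
      exact Multiset.cons_le_cons _ (Multiset.cons_le_cons _ (Multiset.zero_le _))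
    rcases lt_or_gt_of_ne hab with h | h
    · exact hfin _ (by rw [hT, ← pair_add]; exact MSStep.merge2 n₁ a b S h)
    · exact hfin _ (by rw [hT, Multiset.cons_swap, ← pair_add]; exact MSStep.merge2 n₁ b a S h)
  -- distinct first components of leq constraints
  have hl_nodup : (Tl.map fstc).Nodup := by
    by_contra hnd
    obtain ⟨c₁, c₂, S₀, hS, hf⟩ := exists_dup hnd
    obtain ⟨x₁, v₁, rfl⟩ := hTl_leq c₁ (by rw [hS]; simp)
    obtain ⟨x₂, v₂, rfl⟩ := hTl_leq c₂ (by rw [hS]; simp)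
    have hx : x₁ = x₂ := hf
    subst hx
    have hle2 : (MC.leq x₁ v₁ ::ₘ MC.leq x₁ v₂ ::ₘ 0) ≤ T := by
      refine le_trans ?_ hTl_le
      rw [hS]
      exact Multiset.cons_le_cons _ (Multiset.cons_le_cons _ (Multiset.zero_le _))
    obtain ⟨S, hT⟩ := Multiset.le_iff_exists_add.mp hle2
    rw [Multiset.cons_add, Multiset.cons_add, zero_add] at hT
    have hab : v₁ ≠ v₂ := by
      rintro rfl
      apply Multiset.nodup_iff_le.mp hnodup_own v₁
      rw [hT]
      simp only [Multiset.map_cons, own]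
      exact Multiset.cons_le_cons _ (Multiset.cons_le_cons _ (Multiset.zero_le _))
    rcases lt_or_gt_of_ne hab with h | h
    · exact hfin _ (by rw [hT, ← pair_add]; exact MSStep.merge1 x₁ v₁ v₂ S h)
    · exact hfin _ (by rw [hT, Multiset.cons_swap, ← pair_add]; exact MSStep.merge1 x₁ v₂ v₁ S h)
  -- the merge part is a single constraint of level k+1
  have hwt : (Tm.map wt).sum = 2 ^ (k + 1) := by
    rw [← hI.wt_sum, ← hsplit]
    simp only [Multiset.map_add, Multiset.sum_add]
    have h0 : (Tl.map wt).sum = 0 := by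
      apply Multiset.sum_eq_zero
      intro x hx
      obtain ⟨c, hc, rfl⟩ := Multiset.mem_map.mp hx
      obtain ⟨u, v, rfl⟩ := hTl_leq c hc
      rfl
    omega
  have hwt2 : ((Tm.map lvl).map (fun m => 2 ^ m)).sum = 2 ^ (k + 1) := by
    rw [Multiset.map_map, ← hwt]
    apply congrArg
    apply Multiset.map_congr rfl
    intro c hc
    obtain ⟨n, a, rfl⟩ := hTm_mrg c hc
    rfl
  have hFsum : (∑ m ∈ (Tm.map lvl).toFinset, 2 ^ m) = 2 ^ (k + 1) := by
    rw [← hwt2]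
    rw [Finset.sum]
    congr 1
    rw [Multiset.toFinset_val, Multiset.dedup_eq_self.mpr hm_nodup]
  have hF : (Tm.map lvl).toFinset = {k + 1} := pow_sum_eq hFsum
  have hcard1 : Multiset.card Tm = 1 := by
    have h1 : (Tm.map lvl).toFinset.card = 1 := by rw [hF]; rfl
    rw [Multiset.toFinset_card_of_nodup hm_nodup, Multiset.card_map] at h1
    exact h1
  obtain ⟨c, hc⟩ := Multiset.card_eq_one.mp hcard1
  obtain ⟨n, a, hcc⟩ := hTm_mrg c (by rw [hc]; simp)
  subst hcc
  have hn : n = k + 1 := by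
    have h1 : n ∈ (Tm.map lvl).toFinset := by
      rw [Multiset.mem_toFinset, hc]
      simp [lvl]
    rw [hF] at h1
    simpa using h1
  subst hn
  -- decompose s.val into owned positions
  have hsval : s.val = a ::ₘ Tl.map own := by
    rw [← hI.own_eq, ← hsplit, hc]
    simp only [Multiset.map_add, Multiset.map_singleton, own]
    rw [add_comm, Multiset.singleton_add]
  have ha_mem : a ∈ s := by
    rw [← Finset.mem_val, hsval]; simp
  have hcardT : Multiset.card T = 2 ^ k := by
    have := congrArg Multiset.card hI.own_eq
    rw [Multiset.card_map] at this
    rw [this]; exact hcard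
  have hcardTl : Multiset.card Tl + 1 = 2 ^ k := by
    have := congrArg Multiset.card hsplit
    rw [Multiset.card_add, hc] at this
    simp at this
    omega
  -- first components
  have hf_sub : Tl.map fstc ≤ s.val := by
    rw [Multiset.le_iff_subset hl_nodup]
    intro x hx
    obtain ⟨e, he, rfl⟩ := Multiset.mem_map.mp hx
    obtain ⟨u, v, rfl⟩ := hTl_leq e he
    show fstc (MC.leq u v) ∈ s.val
    rw [Finset.mem_val]
    exact hI.leq_mem u v (Multiset.mem_of_le hTl_le he)
  obtain ⟨d, hd⟩ := Multiset.le_iff_exists_add.mp hf_sub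
  have hdcard : Multiset.card d = 1 := by
    have h1 := congrArg Multiset.card hd
    have h2 : Multiset.card s.val = 2 ^ k := hcard
    rw [h2, Multiset.card_add, Multiset.card_map] at h1
    omega
  obtain ⟨z, rfl⟩ := Multiset.card_eq_one.mp hdcard
  have hz_mem : z ∈ s := by
    rw [← Finset.mem_val, hd]; simp
  -- the rank-sum argument
  set m0 := Tl.map (fun e => rnk s (own e) - rnk s (fstc e)) with hm0
  have hsum : m0.sum = rnk s z - rnk s a := by
    rw [hm0, Multiset.sum_map_sub]
    have e1 : (Tl.map fun e => rnk s (own e)) = (Tl.map own).map (rnk s) := by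
      rw [Multiset.map_map]; rfl
    have e2 : (Tl.map fun e => rnk s (fstc e)) = (Tl.map fstc).map (rnk s) := by
      rw [Multiset.map_map]; rfl
    rw [e1, e2]
    have e3 : (s.val.map (rnk s)).sum = rnk s a + ((Tl.map own).map (rnk s)).sum := by
      rw [hsval]; simp
    have e4 : (s.val.map (rnk s)).sum = ((Tl.map fstc).map (rnk s)).sum + rnk s z := by
      rw [hd]; simp
    omega
  have hterms1 : ∀ x ∈ m0, 1 ≤ x := by
    intro x hx
    obtain ⟨e, he, rfl⟩ := Multiset.mem_map.mp hx
    obtain ⟨u, v, rfl⟩ := hTl_leq e he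
    have huv : u < v := hI.leq_lt u v (Multiset.mem_of_le hTl_le he)
    have hu : u ∈ s := hI.leq_mem u v (Multiset.mem_of_le hTl_le he)
    have := rnk_lt hu huv
    show 1 ≤ rnk s (own (MC.leq u v)) - rnk s (fstc (MC.leq u v))
    simp only [own, fstc]
    omega
  have hm0card : Multiset.card m0 = Multiset.card Tl := Multiset.card_map _ _
  have hsum_ge : (Multiset.card m0 : ℤ) ≤ m0.sum := by
    have := Multiset.card_nsmul_le_sum (s := m0) (fun x hx => hterms1 x hx)
    simpa using this
  have hzle : rnk s z ≤ (s.card : ℤ) - 1 := rnk_le hz_mem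
  have ha_nonneg : (0:ℤ) ≤ rnk s a := rnk_nonneg a
  have hpow1 : (1:ℕ) ≤ 2 ^ k := Nat.one_le_two_pow
  have hcardZ : (Multiset.card m0 : ℤ) = (2 ^ k : ℤ) - 1 := by
    rw [hm0card]
    have : (Multiset.card Tl : ℤ) + 1 = ((2:ℤ)) ^ k := by exact_mod_cast congrArg (fun n : ℕ => (n : ℤ)) hcardTl
    omega
  have hcardsZ : (s.card : ℤ) = (2:ℤ) ^ k := by exact_mod_cast hcard
  have ha0 : rnk s a = 0 := by omega
  have hz1 : rnk s z = (s.card : ℤ) - 1 := by omega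
  have hone : ∀ x ∈ m0, x = 1 := by
    apply all_one hterms1
    omega
  have ha_min : a = s.min' hne := rnk_zero_min hne ha_mem ha0
  have hz_max : z = s.max' hne := rnk_max_max hne hz_mem hz1
  -- every leq constraint is a successor edge
  have hform : ∀ e ∈ Tl, e = MC.leq (fstc e) (nxt s (fstc e)) := by
    intro e he
    obtain ⟨u, v, rfl⟩ := hTl_leq e he
    have huv : u < v := hI.leq_lt u v (Multiset.mem_of_le hTl_le he)
    have hu : u ∈ s := hI.leq_mem u v (Multiset.mem_of_le hTl_le he)
    have hv : v ∈ s := by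
      rw [← Finset.mem_val, hsval]
      refine Multiset.mem_cons_of_mem ?_
      exact Multiset.mem_map.mpr ⟨MC.leq u v, he, rfl⟩
    have h1 : rnk s (own (MC.leq u v)) - rnk s (fstc (MC.leq u v)) = 1 :=
      hone _ (Multiset.mem_map_of_mem _ he)
    simp only [own, fstc] at h1
    have hnx : v = nxt s u := succ_nxt hu hv huv (by omega)
    show MC.leq u v = MC.leq (fstc (MC.leq u v)) (nxt s (fstc (MC.leq u v)))
    simp only [fstc]
    rw [← hnx]
  have hTl_eq : Tl = (Tl.map fstc).map (fun u => MC.leq u (nxt s u)) := by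
    rw [Multiset.map_map]
    conv_lhs => rw [← Multiset.map_id Tl]
    apply Multiset.map_congr rfl
    intro e he
    exact hform e he
  -- the sorted list
  set l := s.sort (· ≤ ·) with hl
  have hlcoe : (↑l : Multiset α) = s.val := Finset.sort_eq _ _
  have hllen : l.length = s.card := Finset.length_sort _
  have hlne : l ≠ [] := by
    intro h0
    rw [h0] at hllen
    simp at hllen
    omega
  have hgetlast : l.getLast hlne = s.max' hne := by
    have h1 := List.getLast_eq_getElem hlne
    have h2 := Finset.sorted_last_eq_max' (s := s)
      (h := by rw [hllen, hcard]; omega)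
    rw [h1]
    exact h2
  have hsplit_l : (↑l.dropLast : Multiset α) + {s.max' hne} = s.val := by
    rw [← hgetlast, ← hlcoe]
    have h3 : (↑l.dropLast : Multiset α) + {l.getLast hlne} = ↑(l.dropLast ++ [l.getLast hlne]) := by
      rfl
    rw [h3, List.dropLast_append_getLast hlne]
  have hfirsts_eq : Tl.map fstc = ↑l.dropLast := by
    have h1 : Tl.map fstc + {z} = s.val := hd.symm
    rw [hz_max] at h1
    exact add_right_cancel (h1.trans hsplit_l.symm)
  have hchain : leqChain l = (↑l.dropLast : Multiset α).map (fun u => MC.leq u (nxt s u)) :=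
    leqChain_eq (sort_chain' (s := s))
  -- assemble
  rw [← hsplit, hc, ha_min.symm]
  rw [hTl_eq, hfirsts_eq, ← hchain]
  rw [add_comm, Multiset.singleton_add]

end MSaux

/-- Merge sort correctness: from the initial store
`{Merge(1,e) | e ∈ s}` with `2^k` distinct elements, (1) there is no
infinite derivation, and (2) every reachable final store is
`{Merge(k+1, min s)}` together with the linear chain of `Leq` constraints
in sorted order. -/
theorem mergesort_correct {α : Type} [LinearOrder α]
    (k : ℕ) (s : Finset α) (hcard : s.card = 2 ^ k) :
    (∀ f : ℕ → Multiset (MC α), f 0 = s.val.map (MC.mrg 1) →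
      ¬ ∀ n, MSStep (f n) (f (n + 1))) ∧
    (∀ T : Multiset (MC α),
      Relation.ReflTransGen MSStep (s.val.map (MC.mrg 1)) T →
      (∀ U, ¬ MSStep T U) →
      T = MC.mrg (k + 1)
            (s.min' (Finset.card_pos.mp (by rw [hcard]; positivity))) ::ₘ
          leqChain (s.sort (· ≤ ·))) := by
  constructor
  · intro f h0 hstep
    exact MSaux.no_infinite hcard f h0 hstep
  · intro T hreach hfin
    have hne : s.Nonempty := Finset.card_pos.mp (by rw [hcard]; positivity)
    have hI : ∀ T' : Multiset (MC α),
        Relation.ReflTransGen MSStep (s.val.map (MC.mrg 1)) T' → MSaux.Inv s k T' := by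
      intro T' h
      induction h with
      | refl => exact MSaux.inv_init hcard
      | tail hr hstep ih => exact MSaux.inv_step ih hstep
    exact MSaux.final_eq hcard (hI T hreach) hfin hne
end

section
/- For the gcd CHR program, the multiset {Gcd(n) | n ∈ M} for a finite nonempty multiset M of positive natural numbers rewrites in the abstract semantics to the final store {Gcd(g)} where g = gcd of all elements of M, after removing all Gcd(0) constraints via rule gcd1; moreover rule application preserves the invariant that the gcd of all positive arguments in the store equals g. -/
instance : Std.Associative Nat.gcd := ⟨Nat.gcd_assoc⟩
instance : Std.Commutative Nat.gcd := ⟨Nat.gcd_comm⟩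

/-- Abstract CHR semantics of the gcd program, with `Gcd(n)` represented by
the natural number `n`:
gcd1 @ Gcd(0) ⇔ True
gcd2 @ Gcd(n) \ Gcd(m) ⇔ m ≥ n ∧ n > 0 | Gcd(m−n). -/
inductive GcdStep : Multiset ℕ → Multiset ℕ → Prop
  | gcd1 (S : Multiset ℕ) : GcdStep (0 ::ₘ S) S
  | gcd2 (n m : ℕ) (S : Multiset ℕ) (hmn : n ≤ m) (hn : 0 < n) :
      GcdStep (n ::ₘ m ::ₘ S) (n ::ₘ (m - n) ::ₘ S)

lemma gcd_fold_step {S S' : Multiset ℕ} (h : GcdStep S S') :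
    S.fold Nat.gcd 0 = S'.fold Nat.gcd 0 := by
  cases h with
  | gcd1 S => simp [Multiset.fold_cons_left]
  | gcd2 n m S hmn hn =>
      simp only [Multiset.fold_cons_left, ← Nat.gcd_assoc,
        Nat.gcd_sub_self_right hmn]

lemma gcd_fold_pos {S : Multiset ℕ} (hne : S ≠ 0) (hpos : ∀ n ∈ S, 0 < n) :
    0 < S.fold Nat.gcd 0 := by
  induction S using Multiset.induction with
  | empty => exact absurd rfl hne
  | cons a s ih =>
      rw [Multiset.fold_cons_left]
      have ha : 0 < a := hpos a (Multiset.mem_cons_self a s)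
      exact Nat.gcd_pos_of_pos_left _ ha

lemma gcd_reach (N : ℕ) : ∀ S : Multiset ℕ, S.sum = N → S ≠ 0 →
    (∀ n ∈ S, 0 < n) →
    Relation.ReflTransGen GcdStep S {S.fold Nat.gcd 0} := by
  induction N using Nat.strong_induction_on with
  | _ N ih =>
  intro S hsum hne hpos
  rcases eq_or_ne (Multiset.card S) 1 with h1 | h1
  · obtain ⟨a, rfl⟩ := Multiset.card_eq_one.mp h1
    have : ({a} : Multiset ℕ).fold Nat.gcd 0 = a := by
      simp [Multiset.fold_singleton]
    rw [this]
  · -- at least two elements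
    obtain ⟨a, ha⟩ := Multiset.exists_mem_of_ne_zero hne
    obtain ⟨T, rfl⟩ := Multiset.exists_cons_of_mem ha
    have hT : T ≠ 0 := by
      rintro rfl
      simp at h1
    obtain ⟨b, hb⟩ := Multiset.exists_mem_of_ne_zero hT
    obtain ⟨T', rfl⟩ := Multiset.exists_cons_of_mem hb
    -- reduce to the case n ≤ m
    have key : ∀ n m : ℕ, 0 < n → 0 < m → n ≤ m → (∀ k ∈ T', 0 < k) →
        n + (m + T'.sum) = N →
        Relation.ReflTransGen GcdStep (n ::ₘ m ::ₘ T')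
          {(n ::ₘ m ::ₘ T').fold Nat.gcd 0} := by
      intro n m hn hm hnm hT' hN
      have step1 : GcdStep (n ::ₘ m ::ₘ T') (n ::ₘ (m - n) ::ₘ T') :=
        GcdStep.gcd2 n m T' hnm hn
      rcases eq_or_ne (m - n) 0 with hz | hz
      · -- second step: remove the zero
        have step2 : GcdStep (n ::ₘ (m - n) ::ₘ T') (n ::ₘ T') := by
          rw [hz, Multiset.cons_swap]
          exact GcdStep.gcd1 (n ::ₘ T')
        have hrec : Relation.ReflTransGen GcdStep (n ::ₘ T')
            {(n ::ₘ T').fold Nat.gcd 0} := by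
          refine ih (n + T'.sum) ?_ (n ::ₘ T') (by simp) (by simp) ?_
          · omega
          · intro k hk
            rcases Multiset.mem_cons.mp hk with rfl | hk
            · exact hn
            · exact hT' k hk
        have hfold : (n ::ₘ m ::ₘ T').fold Nat.gcd 0
            = (n ::ₘ T').fold Nat.gcd 0 := by
          rw [gcd_fold_step step1, gcd_fold_step step2]
        rw [hfold]
        exact Relation.ReflTransGen.head step1
          (Relation.ReflTransGen.head step2 hrec)
      · have hrec : Relation.ReflTransGen GcdStep (n ::ₘ (m - n) ::ₘ T')
            {(n ::ₘ (m - n) ::ₘ T').fold Nat.gcd 0} := by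
          refine ih (n + ((m - n) + T'.sum)) ?_ _ (by simp) (by simp) ?_
          · omega
          · intro k hk
            rcases Multiset.mem_cons.mp hk with rfl | hk
            · exact hn
            · rcases Multiset.mem_cons.mp hk with rfl | hk
              · omega
              · exact hT' k hk
        rw [gcd_fold_step step1]
        exact Relation.ReflTransGen.head step1 hrec
    have hsum' : a + (b + T'.sum) = N := by
      simpa [Multiset.sum_cons] using hsum
    have hposT' : ∀ k ∈ T', 0 < k := fun k hk =>
      hpos k (Multiset.mem_cons_of_mem (Multiset.mem_cons_of_mem hk))
    have hpa : 0 < a := hpos a (by simp)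
    have hpb : 0 < b := hpos b (by simp)
    rcases le_total a b with hab | hba
    · exact key a b hpa hpb hab hposT' hsum'
    · rw [Multiset.cons_swap]
      exact key b a hpb hpa hba hposT' (by omega)

lemma gcd_step_src {S U : Multiset ℕ} (h : GcdStep S U) :
    (0 : ℕ) ∈ S ∨ 2 ≤ Multiset.card S := by
  cases h with
  | gcd1 _ => left; simp
  | gcd2 n m T hmn hn => right; simp

lemma gcd_final {g : ℕ} (hg : 0 < g) (U : Multiset ℕ) :
    ¬ GcdStep {g} U := by
  intro h
  rcases gcd_step_src h with h0 | h2
  · rw [Multiset.mem_singleton] at h0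
    omega
  · simp at h2

/-- For a finite nonempty multiset `M` of positive numbers, the store
`{Gcd(n) | n ∈ M}` rewrites to the final store `{Gcd(g)}` where `g` is the
gcd of M; moreover every rule application preserves the gcd of the store. -/
theorem gcd_program_correct (M : Multiset ℕ) (hne : M ≠ 0)
    (hpos : ∀ n ∈ M, 0 < n) :
    Relation.ReflTransGen GcdStep M {M.fold Nat.gcd 0} ∧
    (∀ U, ¬ GcdStep {M.fold Nat.gcd 0} U) ∧
    (∀ S S' : Multiset ℕ, GcdStep S S' →
      S.fold Nat.gcd 0 = S'.fold Nat.gcd 0) := by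
  refine ⟨gcd_reach M.sum M rfl hne hpos,
    fun U => gcd_final (gcd_fold_pos hne hpos) U,
    fun S S' h => gcd_fold_step h⟩
end
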